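/- Let C = {1,2}, σ² > 0, b > 0, a ≥ 0, s ∈ ℝ. Then the pairwise time-lag radial basis function (LRBF) kernel K((t,l),(t',l')) := (σ² / (𝟙{l ≠ l'}·a² + 1)^{1/2}) · exp( −b (t − t' − 𝟙{l ≠ l'}·s)² / (𝟙{l ≠ l'}·a² + 1) ), where 𝟙{l ≠ l'} equals 1 if l ≠ l' and 0 otherwise, is a positive semidefinite kernel on ℝ × C. -/

import Mathlib

open MeasureTheory Real

lemma integrable_gauss_cos (q u : ℝ) (hq : 0 < q) :
    Integrable (fun ω : ℝ => Real.exp (-(q * ω ^ 2)) * Real.cos (ω * u)) := by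
  apply (integrable_exp_neg_mul_sq hq).mono'
  · exact (Continuous.mul (by continuity) (by continuity)).aestronglyMeasurable
  · filter_upwards with ω
    rw [norm_mul, Real.norm_eq_abs, Real.norm_eq_abs, Real.abs_exp, neg_mul]
    calc Real.exp (-(q * ω ^ 2)) * |Real.cos (ω * u)|
        ≤ Real.exp (-(q * ω ^ 2)) * 1 := by
          gcongr; exact Real.abs_cos_le_one _
      _ = Real.exp (-(q * ω ^ 2)) := mul_one _

lemma integral_gauss_cos (q u : ℝ) (hq : 0 < q) :
    ∫ ω : ℝ, Real.exp (-(q * ω ^ 2)) * Real.cos (ω * u) =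
      Real.sqrt (π / q) * Real.exp (-(u ^ 2 / (4 * q))) := by
  have hb : (-(q : ℂ)).re < 0 := by simpa using hq
  have h := integral_cexp_quadratic hb ((u : ℂ) * Complex.I) 0
  have hre : ∀ ω : ℝ, (Complex.exp (-(q:ℂ) * (ω:ℂ) ^ 2 + ((u:ℂ) * Complex.I) * (ω:ℂ) + 0)).re
      = Real.exp (-(q * ω ^ 2)) * Real.cos (ω * u) := by
    intro ω
    have : (-(q:ℂ) * (ω:ℂ) ^ 2 + ((u:ℂ) * Complex.I) * (ω:ℂ) + 0)
        = ((-(q * ω ^ 2) : ℝ) : ℂ) + ((ω * u : ℝ) : ℂ) * Complex.I := by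
      push_cast; ring
    rw [this, Complex.exp_add, ← Complex.ofReal_exp, Complex.re_ofReal_mul,
      Complex.exp_ofReal_mul_I_re]
  have hint := integrable_cexp_quadratic' hb ((u : ℂ) * Complex.I) 0
  have hL : (∫ ω : ℝ, Complex.exp (-(q:ℂ) * (ω:ℂ) ^ 2 + ((u:ℂ) * Complex.I) * (ω:ℂ) + 0)).re
      = ∫ ω : ℝ, Real.exp (-(q * ω ^ 2)) * Real.cos (ω * u) := by
    have hcc := Complex.reCLM.integral_comp_comm hint
    simp only [Complex.reCLM_apply] at hcc
    rw [← hcc]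
    exact integral_congr_ae (Filter.Eventually.of_forall hre)
  rw [← hL, h]
  have harg : (0 : ℂ) - ((u:ℂ) * Complex.I) ^ 2 / (4 * -(q:ℂ)) = ((-(u ^ 2 / (4 * q)) : ℝ) : ℂ) := by
    push_cast
    have : (4 : ℂ) * -(q:ℂ) ≠ 0 := by
      simp only [ne_eq, mul_ne_zero_iff]
      constructor
      · norm_num
      · simpa using hq.ne'
    field_simp
    ring_nf
    simp [Complex.I_sq]
  rw [harg]
  have hpow : ((π : ℂ) / -(-(q:ℂ))) ^ (1 / 2 : ℂ) = ((Real.sqrt (π / q) : ℝ) : ℂ) := by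
    rw [neg_neg, Real.sqrt_eq_rpow, ← Complex.ofReal_div, Complex.ofReal_cpow (by positivity)]
    norm_num
  rw [hpow, ← Complex.ofReal_exp, ← Complex.ofReal_mul, Complex.ofReal_re]

open MeasureTheory Real Finset

lemma sum_cos_psd {n : ℕ} (c : Fin n → ℝ) (τ : Fin n → ℝ) (ω : ℝ) :
    0 ≤ ∑ i, ∑ j, c i * c j * Real.cos (ω * (τ i - τ j)) := by
  have key : ∑ i, ∑ j, c i * c j * Real.cos (ω * (τ i - τ j)) =
      (∑ i, c i * Real.cos (ω * τ i)) ^ 2 + (∑ i, c i * Real.sin (ω * τ i)) ^ 2 := by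
    rw [sq, sq, Finset.sum_mul_sum, Finset.sum_mul_sum, ← Finset.sum_add_distrib]
    refine Finset.sum_congr rfl fun i _ => ?_
    rw [← Finset.sum_add_distrib]
    refine Finset.sum_congr rfl fun j _ => ?_
    rw [mul_sub, Real.cos_sub]
    ring
  rw [key]
  positivity

lemma sum_label_cos_psd {n : ℕ} (c : Fin n → ℝ) (t : Fin n → ℝ) (l : Fin n → Fin 2) (ω : ℝ) :
    0 ≤ ∑ i, ∑ j, c i * c j *
      ((if l i = l j then (1 : ℝ) else 0) * Real.cos (ω * (t i - t j))) := by
  have key : ∀ i j, c i * c j *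
      ((if l i = l j then (1 : ℝ) else 0) * Real.cos (ω * (t i - t j))) =
      ∑ k : Fin 2,
        ((c i * (if l i = k then (1:ℝ) else 0) * Real.cos (ω * t i)) *
            (c j * (if l j = k then (1:ℝ) else 0) * Real.cos (ω * t j)) +
          (c i * (if l i = k then (1:ℝ) else 0) * Real.sin (ω * t i)) *
            (c j * (if l j = k then (1:ℝ) else 0) * Real.sin (ω * t j))) := by
    intro i j
    have h1 : Real.cos (ω * (t i - t j)) =
        Real.cos (ω * t i) * Real.cos (ω * t j) + Real.sin (ω * t i) * Real.sin (ω * t j) := by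
      rw [mul_sub, Real.cos_sub]
    have hfin : ∀ v : Fin 2, v = 0 ∨ v = 1 := by decide
    rcases hfin (l i) with h | h <;> rcases hfin (l j) with h' | h' <;>
      simp [h, h', Fin.sum_univ_two, h1] <;> ring
  calc ∑ i, ∑ j, c i * c j *
        ((if l i = l j then (1 : ℝ) else 0) * Real.cos (ω * (t i - t j)))
      = ∑ i, ∑ j, ∑ k : Fin 2,
          ((c i * (if l i = k then (1:ℝ) else 0) * Real.cos (ω * t i)) *
              (c j * (if l j = k then (1:ℝ) else 0) * Real.cos (ω * t j)) +
            (c i * (if l i = k then (1:ℝ) else 0) * Real.sin (ω * t i)) *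
              (c j * (if l j = k then (1:ℝ) else 0) * Real.sin (ω * t j))) :=
        Finset.sum_congr rfl fun i _ => Finset.sum_congr rfl fun j _ => key i j
    _ = ∑ i, ∑ k : Fin 2, ∑ j, _ := Finset.sum_congr rfl fun i _ => Finset.sum_comm
    _ = ∑ k : Fin 2, ∑ i, ∑ j,
          ((c i * (if l i = k then (1:ℝ) else 0) * Real.cos (ω * t i)) *
              (c j * (if l j = k then (1:ℝ) else 0) * Real.cos (ω * t j)) +
            (c i * (if l i = k then (1:ℝ) else 0) * Real.sin (ω * t i)) *
              (c j * (if l j = k then (1:ℝ) else 0) * Real.sin (ω * t j))) :=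
        Finset.sum_comm
    _ = ∑ k : Fin 2,
          ((∑ i, c i * (if l i = k then (1:ℝ) else 0) * Real.cos (ω * t i)) ^ 2 +
            (∑ i, c i * (if l i = k then (1:ℝ) else 0) * Real.sin (ω * t i)) ^ 2) := by
        refine Finset.sum_congr rfl fun k _ => ?_
        rw [sq, sq, Finset.sum_mul_sum, Finset.sum_mul_sum, ← Finset.sum_add_distrib]
        exact Finset.sum_congr rfl fun i _ => Finset.sum_add_distrib
    _ ≥ 0 := by positivity


/-- A kernel `K` on a set `X` is positive semidefinite if for every finite family of
points and real coefficients, `∑ i j, c i * c j * K (x i) (x j) ≥ 0`. -/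
def IsPSDKernel {X : Type*} (K : X → X → ℝ) : Prop :=
  ∀ (n : ℕ) (x : Fin n → X) (c : Fin n → ℝ),
    0 ≤ ∑ i, ∑ j, c i * c j * K (x i) (x j)

/-- The pairwise time-lag radial basis function (LRBF) kernel
`K((t,l),(t',l')) = σ²/(𝟙{l≠l'}a²+1)^{1/2} · exp(-b(t-t'-𝟙{l≠l'}s)²/(𝟙{l≠l'}a²+1))`
is a positive semidefinite kernel on `ℝ × {1,2}`. -/
theorem gplag_LRBF_psd (σ2 b a s : ℝ) (hσ2 : 0 < σ2) (hb : 0 < b) (ha : 0 ≤ a) :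
    IsPSDKernel (fun p q : ℝ × Fin 2 =>
      σ2 / Real.sqrt ((if p.2 ≠ q.2 then (1 : ℝ) else 0) * a ^ 2 + 1) *
        Real.exp (-b * (p.1 - q.1 - (if p.2 ≠ q.2 then (1 : ℝ) else 0) * s) ^ 2 /
          ((if p.2 ≠ q.2 then (1 : ℝ) else 0) * a ^ 2 + 1))) := by
  intro n x c
  set D : ℝ := a ^ 2 + 1 with hDdef
  have hD1 : 1 ≤ D := by nlinarith [sq_nonneg a]
  have hD0 : 0 < D := by linarith
  set q1 : ℝ := 1 / (4 * b) with hq1def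
  set q2 : ℝ := D / (4 * b) with hq2def
  have hq1 : 0 < q1 := by rw [hq1def]; positivity
  have hq2 : 0 < q2 := by rw [hq2def]; positivity
  have hq12 : q1 ≤ q2 := by rw [hq1def, hq2def]; gcongr
  set c0 : ℝ := σ2 / Real.sqrt (π / q1) with hc0def
  have hc0 : 0 ≤ c0 := by rw [hc0def]; positivity
  have hsq1 : c0 * Real.sqrt (π / q1) = σ2 := by
    rw [hc0def]; field_simp
  have hsq2 : c0 * Real.sqrt (π / q2) = σ2 / Real.sqrt D := by
    have h1 : π / q2 = (π / q1) / D := by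
      rw [hq1def, hq2def]; field_simp
    rw [h1, Real.sqrt_div (by positivity) D, ← mul_div_assoc, hsq1]
  set E : Fin n → Fin n → ℝ := fun i j =>
    σ2 / Real.sqrt ((if (x i).2 ≠ (x j).2 then (1 : ℝ) else 0) * a ^ 2 + 1) *
      Real.exp (-b * ((x i).1 - (x j).1 - (if (x i).2 ≠ (x j).2 then (1 : ℝ) else 0) * s) ^ 2 /
        ((if (x i).2 ≠ (x j).2 then (1 : ℝ) else 0) * a ^ 2 + 1)) with hEdef
  show 0 ≤ ∑ i, ∑ j, c i * c j * E i j
  set τp : Fin n → ℝ := fun i => (x i).1 + (if (x i).2 = 1 then s else 0) with hτpdef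
  set τm : Fin n → ℝ := fun i => (x i).1 - (if (x i).2 = 1 then s else 0) with hτmdef
  set h : Fin n → Fin n → ℝ → ℝ := fun i j ω =>
    c0 / 2 * (Real.exp (-(q2 * ω ^ 2)) * Real.cos (ω * (τp i - τp j))) +
      c0 / 2 * (Real.exp (-(q2 * ω ^ 2)) * Real.cos (ω * (τm i - τm j))) +
      c0 * (if (x i).2 = (x j).2 then (1 : ℝ) else 0) *
        (Real.exp (-(q1 * ω ^ 2)) * Real.cos (ω * ((x i).1 - (x j).1)) -
          Real.exp (-(q2 * ω ^ 2)) * Real.cos (ω * ((x i).1 - (x j).1))) with hhdef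
  have hint : ∀ i j, Integrable (h i j) := by
    intro i j
    exact (((integrable_gauss_cos q2 _ hq2).const_mul _).add
        ((integrable_gauss_cos q2 _ hq2).const_mul _)).add
      (((integrable_gauss_cos q1 _ hq1).sub (integrable_gauss_cos q2 _ hq2)).const_mul _)
  -- pointwise nonnegativity of the spectral density quadratic form
  have hpos : ∀ ω : ℝ, 0 ≤ ∑ i, ∑ j, c i * c j * h i j ω := by
    intro ω
    have hsplit : ∑ i, ∑ j, c i * c j * h i j ω =
        c0 / 2 * Real.exp (-(q2 * ω ^ 2)) *
            (∑ i, ∑ j, c i * c j * Real.cos (ω * (τp i - τp j))) +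
          c0 / 2 * Real.exp (-(q2 * ω ^ 2)) *
            (∑ i, ∑ j, c i * c j * Real.cos (ω * (τm i - τm j))) +
          c0 * (Real.exp (-(q1 * ω ^ 2)) - Real.exp (-(q2 * ω ^ 2))) *
            (∑ i, ∑ j, c i * c j *
              ((if (x i).2 = (x j).2 then (1 : ℝ) else 0) *
                Real.cos (ω * ((x i).1 - (x j).1)))) := by
      simp only [hhdef, Finset.mul_sum, ← Finset.sum_add_distrib]
      refine Finset.sum_congr rfl fun i _ => ?_
      refine Finset.sum_congr rfl fun j _ => ?_
      ring
    rw [hsplit]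
    have hee : Real.exp (-(q2 * ω ^ 2)) ≤ Real.exp (-(q1 * ω ^ 2)) := by
      apply Real.exp_le_exp.mpr
      have := mul_le_mul_of_nonneg_right hq12 (sq_nonneg ω)
      linarith
    have h1 : 0 ≤ c0 / 2 * Real.exp (-(q2 * ω ^ 2)) := by positivity
    have h3 : 0 ≤ c0 * (Real.exp (-(q1 * ω ^ 2)) - Real.exp (-(q2 * ω ^ 2))) :=
      mul_nonneg hc0 (by linarith)
    refine add_nonneg (add_nonneg ?_ ?_) ?_
    · exact mul_nonneg h1 (sum_cos_psd c τp ω)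
    · exact mul_nonneg h1 (sum_cos_psd c τm ω)
    · exact mul_nonneg h3 (sum_label_cos_psd c (fun i => (x i).1) (fun i => (x i).2) ω)
  -- the integral of h i j is the symmetrized kernel
  have hval : ∀ i j, ∫ ω, h i j ω = (E i j + E j i) / 2 := by
    intro i j
    have iA : Integrable (fun ω : ℝ => Real.exp (-(q2 * ω ^ 2)) *
        Real.cos (ω * (τp i - τp j))) := integrable_gauss_cos _ _ hq2
    have iB : Integrable (fun ω : ℝ => Real.exp (-(q2 * ω ^ 2)) *
        Real.cos (ω * (τm i - τm j))) := integrable_gauss_cos _ _ hq2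
    have iC : Integrable (fun ω : ℝ => Real.exp (-(q1 * ω ^ 2)) *
        Real.cos (ω * ((x i).1 - (x j).1))) := integrable_gauss_cos _ _ hq1
    have iD : Integrable (fun ω : ℝ => Real.exp (-(q2 * ω ^ 2)) *
        Real.cos (ω * ((x i).1 - (x j).1))) := integrable_gauss_cos _ _ hq2
    have hsum : ∫ ω, h i j ω =
        c0 / 2 * (Real.sqrt (π / q2) * Real.exp (-((τp i - τp j) ^ 2 / (4 * q2)))) +
          c0 / 2 * (Real.sqrt (π / q2) * Real.exp (-((τm i - τm j) ^ 2 / (4 * q2)))) +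
          c0 * (if (x i).2 = (x j).2 then (1 : ℝ) else 0) *
            (Real.sqrt (π / q1) * Real.exp (-(((x i).1 - (x j).1) ^ 2 / (4 * q1))) -
              Real.sqrt (π / q2) * Real.exp (-(((x i).1 - (x j).1) ^ 2 / (4 * q2)))) := by
      have iAB : Integrable (fun ω : ℝ =>
          c0 / 2 * (Real.exp (-(q2 * ω ^ 2)) * Real.cos (ω * (τp i - τp j))) +
            c0 / 2 * (Real.exp (-(q2 * ω ^ 2)) * Real.cos (ω * (τm i - τm j)))) :=
        (iA.const_mul (c0 / 2)).add (iB.const_mul (c0 / 2))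
      have iCD : Integrable (fun ω : ℝ =>
          (c0 * if (x i).2 = (x j).2 then (1 : ℝ) else 0) *
            (Real.exp (-(q1 * ω ^ 2)) * Real.cos (ω * ((x i).1 - (x j).1)) -
              Real.exp (-(q2 * ω ^ 2)) * Real.cos (ω * ((x i).1 - (x j).1)))) :=
        (iC.sub iD).const_mul _
      have iA' : Integrable (fun ω : ℝ =>
          c0 / 2 * (Real.exp (-(q2 * ω ^ 2)) * Real.cos (ω * (τp i - τp j)))) :=
        iA.const_mul _
      have iB' : Integrable (fun ω : ℝ =>
          c0 / 2 * (Real.exp (-(q2 * ω ^ 2)) * Real.cos (ω * (τm i - τm j)))) :=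
        iB.const_mul _
      simp only [hhdef]
      rw [MeasureTheory.integral_add iAB iCD,
        MeasureTheory.integral_add iA' iB',
        MeasureTheory.integral_const_mul, MeasureTheory.integral_const_mul,
        MeasureTheory.integral_const_mul, MeasureTheory.integral_sub iC iD,
        integral_gauss_cos _ _ hq2, integral_gauss_cos _ _ hq2,
        integral_gauss_cos _ _ hq1, integral_gauss_cos _ _ hq2]
    rw [hsum]
    by_cases hl : (x i).2 = (x j).2
    · have hne : ¬((x i).2 ≠ (x j).2) := by simpa using hl
      have hne' : ¬((x j).2 ≠ (x i).2) := by simp [hl]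
      have hτp : τp i - τp j = (x i).1 - (x j).1 := by
        simp only [hτpdef, hl]; ring
      have hτm : τm i - τm j = (x i).1 - (x j).1 := by
        simp only [hτmdef, hl]; ring
      have hexp1 : -(((x i).1 - (x j).1) ^ 2 / (4 * q1)) =
          -b * ((x i).1 - (x j).1 - 0 * s) ^ 2 / (0 * a ^ 2 + 1) := by
        rw [hq1def]; field_simp; ring
      have hexp1' : -(((x i).1 - (x j).1) ^ 2 / (4 * q1)) =
          -b * ((x j).1 - (x i).1 - 0 * s) ^ 2 / (0 * a ^ 2 + 1) := by
        rw [hq1def]; field_simp; ring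
      simp only [hEdef, if_neg hne, if_neg hne', if_pos hl, hτp, hτm]
      rw [← hexp1, ← hexp1']
      rw [show (0 : ℝ) * a ^ 2 + 1 = 1 by ring, Real.sqrt_one]
      linear_combination Real.exp (-(((x i).1 - (x j).1) ^ 2 / (4 * q1))) * hsq1
    · have hne : (x i).2 ≠ (x j).2 := hl
      have hne' : (x j).2 ≠ (x i).2 := fun hh => hl hh.symm
      have hone : (1 : ℝ) * a ^ 2 + 1 = D := by rw [hDdef]; ring
      have hfin : ∀ v : Fin 2, v = 0 ∨ v = 1 := by decide
      have hcases : (τp i - τp j = (x i).1 - (x j).1 - s ∧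
            τm i - τm j = (x i).1 - (x j).1 + s) ∨
          (τp i - τp j = (x i).1 - (x j).1 + s ∧
            τm i - τm j = (x i).1 - (x j).1 - s) := by
        rcases hfin (x i).2 with h1 | h1 <;> rcases hfin (x j).2 with h2 | h2
        · exact absurd (h1.trans h2.symm) hl
        · left
          constructor <;> simp [hτpdef, hτmdef, h1, h2] <;> ring
        · right
          constructor <;> simp [hτpdef, hτmdef, h1, h2] <;> ring
        · exact absurd (h1.trans h2.symm) hl
      have hexp2 : ∀ u : ℝ, -(u ^ 2 / (4 * q2)) = -b * u ^ 2 / D := by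
        intro u; rw [hq2def]; field_simp
      have hu1 : ((x j).1 - (x i).1 - 1 * s) ^ 2 = ((x i).1 - (x j).1 + s) ^ 2 := by ring
      have hu2 : ((x i).1 - (x j).1 - 1 * s) ^ 2 = ((x i).1 - (x j).1 - s) ^ 2 := by ring
      simp only [hEdef, if_pos hne, if_pos hne', if_neg hl, hone, hu1, hu2]
      rcases hcases with ⟨hp, hm⟩ | ⟨hp, hm⟩ <;> rw [hp, hm] <;>
        rw [hexp2 ((x i).1 - (x j).1 - s), hexp2 ((x i).1 - (x j).1 + s)] <;>
        linear_combination (Real.exp (-b * ((x i).1 - (x j).1 - s) ^ 2 / D) / 2 +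
          Real.exp (-b * ((x i).1 - (x j).1 + s) ^ 2 / D) / 2) * hsq2
  -- symmetrize the quadratic form
  have h2 : ∑ i, ∑ j, c i * c j * E j i = ∑ i, ∑ j, c i * c j * E i j := by
    rw [Finset.sum_comm]
    exact Finset.sum_congr rfl fun i _ => Finset.sum_congr rfl fun j _ => by ring
  have goal_eq : ∑ i, ∑ j, c i * c j * E i j =
      ∑ i, ∑ j, c i * c j * ((E i j + E j i) / 2) := by
    have expand : ∀ i j : Fin n, c i * c j * ((E i j + E j i) / 2) =
        c i * c j * E i j / 2 + c i * c j * E j i / 2 := fun i j => by ring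
    simp only [expand, Finset.sum_add_distrib, ← Finset.sum_div, h2]
    ring
  rw [goal_eq]
  calc (0 : ℝ) ≤ ∫ ω, ∑ i, ∑ j, c i * c j * h i j ω :=
        MeasureTheory.integral_nonneg hpos
    _ = ∑ i, ∑ j, c i * c j * ((E i j + E j i) / 2) := by
        rw [MeasureTheory.integral_finset_sum _
          (fun i _ => MeasureTheory.integrable_finset_sum _
            (fun j _ => (hint i j).const_mul _))]
        refine Finset.sum_congr rfl fun i _ => ?_
        rw [MeasureTheory.integral_finset_sum _ (fun j _ => (hint i j).const_mul _)]
        refine Finset.sum_congr rfl fun j _ => ?_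
        rw [MeasureTheory.integral_const_mul, hval i j]
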